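/- Let N = 2 and m₁, m₂ > 0, M = m₁ + m₂. A configuration (ζ₁, ζ₂) ∈ (ℝ²)² with ζ₁ ≠ ζ₂ is a critical point of V_m if and only if |ζ₁ − ζ₂| = (M/(4π))^{1/3} and m₁ ζ₁ + m₂ ζ₂ = 0. -/

import Mathlib

open Finset

/-- The potential `V_m(ζ) = (1/(8π)) Σ_{j≠k} m_j m_k/|ζ_k−ζ_j| + (1/2) Σ_j m_j |ζ_j|²`,
here for `N = 2`:  `V_m(ζ₁,ζ₂) = m₁m₂/(4π|ζ₁−ζ₂|) + (1/2)(m₁|ζ₁|² + m₂|ζ₂|²)`. -/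
noncomputable def Vm (N : ℕ) (m : Fin N → ℝ) (ζ : Fin N → ℂ) : ℝ :=
  (1 / (8 * Real.pi)) * ∑ j : Fin N, ∑ k ∈ Finset.univ.erase j, m j * m k / ‖ζ k - ζ j‖
    + (1 / 2) * ∑ j : Fin N, m j * ‖ζ j‖ ^ 2

open ContinuousLinearMap RealInnerProductSpace in
private lemma hasFDerivAt_inv_norm' {x : ℂ} (hx : x ≠ 0) :
    HasFDerivAt (fun y : ℂ => ‖y‖⁻¹) ((-(‖x‖ ^ 3)⁻¹) • innerSL ℝ x) x := by
  have hn : ‖x‖ ≠ 0 := norm_ne_zero_iff.mpr hx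
  have h2 : HasFDerivAt (fun y : ℂ => ‖y‖ ^ 2) ((2 : ℕ) • innerSL ℝ x) x :=
    (hasStrictFDerivAt_norm_sq x).hasFDerivAt
  have h4 := h2.sqrt (by positivity)
  have he : (fun y : ℂ => Real.sqrt (‖y‖ ^ 2)) = fun y : ℂ => ‖y‖ :=
    funext fun y => Real.sqrt_sq (norm_nonneg y)
  rw [he] at h4
  have h5 := (hasDerivAt_inv hn).comp_hasFDerivAt x h4
  have h6 : HasFDerivAt (fun y : ℂ => ‖y‖⁻¹)
      ((-(‖x‖ ^ 2)⁻¹) • ((1 / (2 * Real.sqrt (‖x‖ ^ 2))) • ((2:ℕ) • innerSL ℝ x))) x := h5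
  convert h6 using 1
  rw [Real.sqrt_sq (norm_nonneg x)]
  ext y
  simp only [smul_apply, smul_eq_mul, innerSL_apply_apply, Nat.cast_smul_eq_nsmul]
  field_simp
  ring

private lemma cube_root_eq' {x y : ℝ} (hx : 0 ≤ x) (h : x ^ 3 = y) : x = y ^ ((1 : ℝ) / 3) := by
  subst h
  rw [← Real.rpow_natCast x 3, ← Real.rpow_mul hx]
  norm_num

private lemma cube_of_root' {y : ℝ} (hy : 0 ≤ y) : (y ^ ((1 : ℝ) / 3)) ^ (3 : ℕ) = y := by
  rw [← Real.rpow_natCast (y ^ ((1:ℝ)/3)) 3, ← Real.rpow_mul hy]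
  norm_num

set_option maxHeartbeats 1000000 in
open ContinuousLinearMap RealInnerProductSpace in
/-- for `N = 2`, a configuration `(ζ₁,ζ₂)` with `ζ₁ ≠ ζ₂` is a critical
point of `V_m` if and only if `|ζ₁ − ζ₂| = (M/(4π))^{1/3}` and `m₁ζ₁ + m₂ζ₂ = 0`,
where `M = m₁ + m₂`. -/
theorem stmt8 (m : Fin 2 → ℝ) (hm : ∀ j, 0 < m j)
    (ζ : Fin 2 → ℂ) (hζ : ζ 0 ≠ ζ 1) :
    fderiv ℝ (Vm 2 m) ζ = 0 ↔
      (‖ζ 0 - ζ 1‖ = ((m 0 + m 1) / (4 * Real.pi)) ^ ((1 : ℝ) / 3) ∧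
        (m 0 : ℝ) • ζ 0 + (m 1 : ℝ) • ζ 1 = 0) := by
  have hπ : (0 : ℝ) < Real.pi := Real.pi_pos
  have hm0 := hm 0
  have hm1 := hm 1
  have hM : (0 : ℝ) < m 0 + m 1 := by linarith
  have hr : ζ 0 - ζ 1 ≠ 0 := sub_ne_zero.mpr hζ
  have hn : (0 : ℝ) < ‖ζ 0 - ζ 1‖ := norm_pos_iff.mpr hr
  -- the scalar `S = c / ‖r‖³`
  set S : ℝ := (m 0 * m 1 / (4 * Real.pi)) / ‖ζ 0 - ζ 1‖ ^ 3 with hSdef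
  -- rewrite the potential
  have hV : Vm 2 m = fun η : Fin 2 → ℂ =>
      (m 0 * m 1 / (4 * Real.pi)) * ‖η 0 - η 1‖⁻¹
        + ((1/2 * m 0) * ‖η 0‖ ^ 2 + (1/2 * m 1) * ‖η 1‖ ^ 2) := by
    funext η
    simp only [Vm, Fin.sum_univ_two, show (univ.erase (0:Fin 2)) = {1} from by decide,
      show (univ.erase (1:Fin 2)) = {0} from by decide, Finset.sum_singleton,
      norm_sub_rev (η 1) (η 0), div_eq_mul_inv]
    ring
  -- compute the derivative
  have hp0 : HasFDerivAt (fun η : Fin 2 → ℂ => η 0)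
      (proj 0 : (Fin 2 → ℂ) →L[ℝ] ℂ) ζ := (proj 0 : (Fin 2 → ℂ) →L[ℝ] ℂ).hasFDerivAt
  have hp1 : HasFDerivAt (fun η : Fin 2 → ℂ => η 1)
      (proj 1 : (Fin 2 → ℂ) →L[ℝ] ℂ) ζ := (proj 1 : (Fin 2 → ℂ) →L[ℝ] ℂ).hasFDerivAt
  have hsub : HasFDerivAt (fun η : Fin 2 → ℂ => η 0 - η 1)
      ((proj 0 : (Fin 2 → ℂ) →L[ℝ] ℂ) - proj 1) ζ := hp0.sub hp1
  have ht1 : HasFDerivAt (fun η : Fin 2 → ℂ => (m 0 * m 1 / (4 * Real.pi)) * ‖η 0 - η 1‖⁻¹)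
      ((m 0 * m 1 / (4 * Real.pi)) • (((-(‖ζ 0 - ζ 1‖ ^ 3)⁻¹) • innerSL ℝ (ζ 0 - ζ 1)).comp
        ((proj 0 : (Fin 2 → ℂ) →L[ℝ] ℂ) - proj 1))) ζ :=
    (((hasFDerivAt_inv_norm' hr).comp ζ hsub)).const_mul _
  have ht2 : HasFDerivAt (fun η : Fin 2 → ℂ => (1/2 * m 0) * ‖η 0‖ ^ 2)
      ((1/2 * m 0) • (((2:ℕ) • innerSL ℝ (ζ 0)).comp (proj 0 : (Fin 2 → ℂ) →L[ℝ] ℂ))) ζ :=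
    ((hasStrictFDerivAt_norm_sq (ζ 0)).hasFDerivAt.comp ζ hp0).const_mul _
  have ht3 : HasFDerivAt (fun η : Fin 2 → ℂ => (1/2 * m 1) * ‖η 1‖ ^ 2)
      ((1/2 * m 1) • (((2:ℕ) • innerSL ℝ (ζ 1)).comp (proj 1 : (Fin 2 → ℂ) →L[ℝ] ℂ))) ζ :=
    ((hasStrictFDerivAt_norm_sq (ζ 1)).hasFDerivAt.comp ζ hp1).const_mul _
  have hD : HasFDerivAt (fun η : Fin 2 → ℂ => (m 0 * m 1 / (4 * Real.pi)) * ‖η 0 - η 1‖⁻¹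
      + ((1/2 * m 0) * ‖η 0‖ ^ 2 + (1/2 * m 1) * ‖η 1‖ ^ 2)) _ ζ := ht1.add (ht2.add ht3)
  rw [← hV] at hD
  rw [hD.fderiv]
  -- evaluation of the derivative
  have hL : ∀ w : Fin 2 → ℂ,
      (((m 0 * m 1 / (4 * Real.pi)) • (((-(‖ζ 0 - ζ 1‖ ^ 3)⁻¹) • innerSL ℝ (ζ 0 - ζ 1)).comp
          ((proj 0 : (Fin 2 → ℂ) →L[ℝ] ℂ) - proj 1)) +
        ((1/2 * m 0) • (((2:ℕ) • innerSL ℝ (ζ 0)).comp (proj 0 : (Fin 2 → ℂ) →L[ℝ] ℂ)) +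
         (1/2 * m 1) • (((2:ℕ) • innerSL ℝ (ζ 1)).comp (proj 1 : (Fin 2 → ℂ) →L[ℝ] ℂ)))) :
          (Fin 2 → ℂ) →L[ℝ] ℝ) w
        = ⟪(m 0 : ℝ) • ζ 0 - S • (ζ 0 - ζ 1), w 0⟫
          + ⟪(m 1 : ℝ) • ζ 1 + S • (ζ 0 - ζ 1), w 1⟫ := by
    intro w
    simp only [add_apply, coe_smul', Pi.smul_apply, comp_apply, sub_apply, proj_apply,
      innerSL_apply_apply, smul_apply, smul_eq_mul, inner_sub_left, inner_add_left,
      real_inner_smul_left, inner_sub_right, Nat.cast_smul_eq_nsmul, hSdef]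
    ring
  constructor
  · intro h
    have h' : ∀ w : Fin 2 → ℂ,
        ⟪(m 0 : ℝ) • ζ 0 - S • (ζ 0 - ζ 1), w 0⟫
          + ⟪(m 1 : ℝ) • ζ 1 + S • (ζ 0 - ζ 1), w 1⟫ = 0 := by
      intro w
      rw [← hL w, h]
      rfl
    have ha : (m 0 : ℝ) • ζ 0 - S • (ζ 0 - ζ 1) = 0 := by
      have := h' (Pi.single 0 ((m 0 : ℝ) • ζ 0 - S • (ζ 0 - ζ 1)))
      simp only [Pi.single_eq_same, Pi.single_eq_of_ne (show (1:Fin 2) ≠ 0 from by decide),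
        inner_zero_right, add_zero] at this
      exact inner_self_eq_zero.mp this
    have hb : (m 1 : ℝ) • ζ 1 + S • (ζ 0 - ζ 1) = 0 := by
      have := h' (Pi.single 1 ((m 1 : ℝ) • ζ 1 + S • (ζ 0 - ζ 1)))
      simp only [Pi.single_eq_same, Pi.single_eq_of_ne (show (0:Fin 2) ≠ 1 from by decide),
        inner_zero_right, zero_add] at this
      exact inner_self_eq_zero.mp this
    have hmom : (m 0 : ℝ) • ζ 0 + (m 1 : ℝ) • ζ 1 = 0 := by
      have h2 : ((m 0 : ℝ) • ζ 0 - S • (ζ 0 - ζ 1)) + ((m 1 : ℝ) • ζ 1 + S • (ζ 0 - ζ 1)) = 0 := by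
        rw [ha, hb, add_zero]
      rw [← h2]; module
    refine ⟨?_, hmom⟩
    have hkey : (m 0 * m 1 - (m 0 + m 1) * S) • (ζ 0 - ζ 1) = 0 := by
      have h2 : (m 1 : ℝ) • ((m 0 : ℝ) • ζ 0 - S • (ζ 0 - ζ 1))
          - (m 0 : ℝ) • ((m 1 : ℝ) • ζ 1 + S • (ζ 0 - ζ 1)) = 0 := by
        rw [ha, hb, smul_zero, smul_zero, sub_zero]
      rw [← h2]; module
    rcases smul_eq_zero.mp hkey with h2 | h2
    · have h4 : (m 0 + m 1) * (m 0 * m 1 / (4 * Real.pi) / ‖ζ 0 - ζ 1‖ ^ 3) = m 0 * m 1 := by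
        rw [hSdef] at h2; linarith
      have hn3 : ‖ζ 0 - ζ 1‖ ^ 3 = (m 0 + m 1) / (4 * Real.pi) := by
        have hC : ‖ζ 0 - ζ 1‖ ≠ 0 := hn.ne'
        field_simp [hC] at h4
        rw [eq_div_iff (by positivity)]
        nlinarith [h4, mul_pos hm0 hm1]
      exact cube_root_eq' (le_of_lt hn) hn3
    · exact absurd h2 hr
  · rintro ⟨hnorm, hmom⟩
    have hn3 : ‖ζ 0 - ζ 1‖ ^ 3 = (m 0 + m 1) / (4 * Real.pi) := by
      rw [hnorm]
      exact cube_of_root' (by positivity)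
    have hMS : (m 0 + m 1) * S = m 0 * m 1 := by
      rw [hSdef, hn3]
      field_simp
    have hMu : ((m 0 + m 1 : ℝ)) • ζ 0 - (m 1 : ℝ) • (ζ 0 - ζ 1) = 0 := by
      rw [← hmom]; module
    have hMv : ((m 0 + m 1 : ℝ)) • ζ 1 + (m 0 : ℝ) • (ζ 0 - ζ 1) = 0 := by
      rw [← hmom]; module
    have ha : (m 0 : ℝ) • ζ 0 - S • (ζ 0 - ζ 1) = 0 := by
      have h2 : (m 0 + m 1 : ℝ) • ((m 0 : ℝ) • ζ 0 - S • (ζ 0 - ζ 1))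
          = (m 0 : ℝ) • (((m 0 + m 1 : ℝ)) • ζ 0 - (m 1 : ℝ) • (ζ 0 - ζ 1))
            + (m 0 * m 1 - (m 0 + m 1) * S) • (ζ 0 - ζ 1) := by module
      rw [hMu, hMS, smul_zero, sub_self, zero_smul, add_zero] at h2
      exact (smul_eq_zero.mp h2).resolve_left (by positivity)
    have hb : (m 1 : ℝ) • ζ 1 + S • (ζ 0 - ζ 1) = 0 := by
      have h2 : (m 0 + m 1 : ℝ) • ((m 1 : ℝ) • ζ 1 + S • (ζ 0 - ζ 1))
          = (m 1 : ℝ) • (((m 0 + m 1 : ℝ)) • ζ 1 + (m 0 : ℝ) • (ζ 0 - ζ 1))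
            + ((m 0 + m 1) * S - m 0 * m 1) • (ζ 0 - ζ 1) := by module
      rw [hMv, hMS, smul_zero, sub_self, zero_smul, add_zero] at h2
      exact (smul_eq_zero.mp h2).resolve_left (by positivity)
    ext w
    rw [ContinuousLinearMap.zero_apply, hL w, ha, hb]
    simp
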